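/- Let d, T be positive integers, let τ be an integer with 1 ≤ τ ≤ T, let B > 0, and let R ≥ 0 and R₀ ≥ 0 be reals. Let v₁, …, v_τ ∈ ℝᵈ and θ₁, …, θ_τ ∈ Ω := {θ ∈ ℝᵈ : θ ≥ 0, ‖θ‖₁ ≤ 1}. Define g_t(θ) := θ · (v_t − (B/T)𝟏). Suppose the online-learning regret bound sup_{θ ∈ Ω} Σ_{t=1}^{τ} g_t(θ) − Σ_{t=1}^{τ} g_t(θ_t) ≤ R holds, and suppose that either τ = T, or there exists a coordinate j ∈ [d] with Σ_{t=1}^{τ} (v_t)_j ≥ B − R₀. Then Σ_{t=1}^{τ} θ_t · (v_t − (B/T)𝟏) ≥ B − τB/T − R − R₀. -/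

import Mathlib

open Matrix

/-- **Online-learning guarantee for the dual multipliers.** If the played multipliers
`θ_t ∈ Ω = {θ ≥ 0, ‖θ‖₁ ≤ 1}` satisfy the regret bound `R` against every fixed `θ ∈ Ω`
for the linear functions `g_t(θ) = θ·(v_t − (B/T)𝟏)`, and either `τ = T` or some resource
`j` has `Σ_{t≤τ} (v_t)_j ≥ B − R₀`, then
`Σ_{t=1}^τ θ_t·(v_t − (B/T)𝟏) ≥ B − τB/T − R − R₀`. -/
theorem stmt_6 (d T : ℕ) (hd : 0 < d) (hT : 0 < T)
    (τ : ℕ) (hτ1 : 1 ≤ τ) (hτT : τ ≤ T)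
    (B R R₀ : ℝ) (hB : 0 < B) (hR : 0 ≤ R) (hR₀ : 0 ≤ R₀)
    (v : ℕ → Fin d → ℝ) (θ : ℕ → Fin d → ℝ)
    (hθ : ∀ t ∈ Finset.Icc 1 τ, (∀ j, 0 ≤ θ t j) ∧ ∑ j, θ t j ≤ 1)
    (hreg : ∀ θ' : Fin d → ℝ, (∀ j, 0 ≤ θ' j) → ∑ j, θ' j ≤ 1 →
      (∑ t ∈ Finset.Icc 1 τ, θ' ⬝ᵥ (v t - fun _ => B / (T : ℝ)))
        - (∑ t ∈ Finset.Icc 1 τ, θ t ⬝ᵥ (v t - fun _ => B / (T : ℝ))) ≤ R)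
    (hstop : τ = T ∨ ∃ j : Fin d, B - R₀ ≤ ∑ t ∈ Finset.Icc 1 τ, v t j) :
    B - τ * B / T - R - R₀
      ≤ ∑ t ∈ Finset.Icc 1 τ, θ t ⬝ᵥ (v t - fun _ => B / (T : ℝ)) := by

  have hTpos : (0:ℝ) < T := by exact_mod_cast hT
  rcases hstop with rfl | ⟨j, hj⟩
  · have h0 := hreg (fun _ => 0) (fun j => le_refl 0) (by simp)
    have hz : (∑ t ∈ Finset.Icc 1 τ, (fun _ => (0:ℝ)) ⬝ᵥ (v t - fun _ => B / (τ : ℝ))) = 0 := by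
      simp [dotProduct]
    rw [hz] at h0
    have : B - (τ:ℕ) * B / (τ:ℕ) = 0 := by field_simp; ring
    rw [this]
    linarith
  · have he := hreg (fun i => if i = j then 1 else 0)
      (fun i => by positivity) (by simp)
    have hdot : ∀ t, (fun i => if i = j then (1:ℝ) else 0) ⬝ᵥ (v t - fun _ => B / (T : ℝ))
        = v t j - B / T := by
      intro t
      simp [dotProduct, Pi.sub_apply]
    have hsum : (∑ t ∈ Finset.Icc 1 τ, (fun i => if i = j then (1:ℝ) else 0) ⬝ᵥ (v t - fun _ => B / (T : ℝ)))
        = (∑ t ∈ Finset.Icc 1 τ, v t j) - τ * (B / T) := by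
      rw [Finset.sum_congr rfl (fun t _ => hdot t), Finset.sum_sub_distrib]
      simp [Nat.Icc_eq_range', mul_comm]
    rw [hsum] at he
    have : (τ:ℝ) * B / T = τ * (B/T) := by ring
    linarith
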